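/- In g = osp(2|2q,ℂ) with the involution θ given by conjugation with the matrix g = diag(I, 1_{2q}) where I = [[0,1],[1,0]], the fixed-point decomposition g = k ⊕ p satisfies: p₀ = 𝔞 is one-dimensional and self-centralizing in p₀, the centralizer of 𝔞 in p₁ is zero, there are exactly two restricted roots ±λ (both odd), the odd multiplicity is m_{1,λ} = dim p₁ = 2q, and λ(A_λ) ≠ 0 where A_λ is the coroot determined by the supertrace form. -/

import Mathlib

open Matrix

namespace OspExample

variable (q : ℕ)

/-- Index type for `ℂ^{2|2q}`: two even coordinates followed by `q ⊕ q` odd ones. -/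
abbrev Ix (q : ℕ) := Fin 2 ⊕ (Fin q ⊕ Fin q)

/-- The linear functional picking out the `(a,b)` entry of a matrix. -/
noncomputable def entry (a b : Ix q) : Matrix (Ix q) (Ix q) ℂ →ₗ[ℂ] ℂ where
  toFun x := x a b
  map_add' _ _ := rfl
  map_smul' _ _ := rfl

lemma entry_apply (a b : Ix q) (x : Matrix (Ix q) (Ix q) ℂ) : entry q a b x = x a b := rfl

/-- The even part `g₀ = o(2,ℂ) ⊕ sp(2q,ℂ)` of `osp(2|2q,ℂ)`, realized with respect to
the orthosymplectic form `I ⊕ J`, `I = [[0,1],[1,0]]`, `J = [[0,1],[-1,0]]` (in `q×q`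
blocks): block-diagonal matrices `diag(m,A)` with `mᵀI + Im = 0`, `AᵀJ + JA = 0`,
written out entrywise. -/
noncomputable def g0 : Submodule ℂ (Matrix (Ix q) (Ix q) ℂ) :=
  (⨅ (i : Fin 2) (a : Fin q ⊕ Fin q), LinearMap.ker (entry q (Sum.inl i) (Sum.inr a))) ⊓
  (⨅ (i : Fin 2) (a : Fin q ⊕ Fin q), LinearMap.ker (entry q (Sum.inr a) (Sum.inl i))) ⊓
  (⨅ (i : Fin 2) (j : Fin 2), LinearMap.ker
    (entry q (Sum.inl i) (Sum.inl j) + entry q (Sum.inl (1 - j)) (Sum.inl (1 - i)))) ⊓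
  (⨅ (a : Fin q) (b : Fin q), LinearMap.ker
    (entry q (Sum.inr (Sum.inr a)) (Sum.inr (Sum.inl b))
      - entry q (Sum.inr (Sum.inr b)) (Sum.inr (Sum.inl a)))) ⊓
  (⨅ (a : Fin q) (b : Fin q), LinearMap.ker
    (entry q (Sum.inr (Sum.inl b)) (Sum.inr (Sum.inl a))
      + entry q (Sum.inr (Sum.inr a)) (Sum.inr (Sum.inr b)))) ⊓
  (⨅ (a : Fin q) (b : Fin q), LinearMap.ker
    (entry q (Sum.inr (Sum.inl b)) (Sum.inr (Sum.inr a))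
      - entry q (Sum.inr (Sum.inl a)) (Sum.inr (Sum.inr b))))

/-- The odd part `g₁` of `osp(2|2q,ℂ)`: block off-diagonal matrices whose top-right
block is determined by the bottom-left one (entrywise version of the supertranspose
condition, matching the explicit parametrization of the paper). -/
noncomputable def g1 : Submodule ℂ (Matrix (Ix q) (Ix q) ℂ) :=
  (⨅ (i : Fin 2) (j : Fin 2), LinearMap.ker (entry q (Sum.inl i) (Sum.inl j))) ⊓
  (⨅ (a : Fin q ⊕ Fin q) (b : Fin q ⊕ Fin q),
    LinearMap.ker (entry q (Sum.inr a) (Sum.inr b))) ⊓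
  (⨅ (i : Fin 2) (a : Fin q), LinearMap.ker
    (entry q (Sum.inl i) (Sum.inr (Sum.inl a))
      + entry q (Sum.inr (Sum.inr a)) (Sum.inl (1 - i)))) ⊓
  (⨅ (i : Fin 2) (a : Fin q), LinearMap.ker
    (entry q (Sum.inl i) (Sum.inr (Sum.inr a))
      - entry q (Sum.inr (Sum.inl a)) (Sum.inl (1 - i))))

/-- The matrix `g = diag(I, 1_{2q})` implementing the involution. -/
noncomputable def gmat : Matrix (Ix q) (Ix q) ℂ := Matrix.fromBlocks !![0, 1; 1, 0] 0 0 1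

/-- The involution `θ(x) = g x g`. -/
noncomputable def θmap : Matrix (Ix q) (Ix q) ℂ →ₗ[ℂ] Matrix (Ix q) (Ix q) ℂ :=
  (LinearMap.mulRight ℂ (gmat q)).comp (LinearMap.mulLeft ℂ (gmat q))

/-- The generator `H = diag(1,-1,0,…,0)` of the even Cartan subspace `𝔞 = p₀`. -/
noncomputable def H : Matrix (Ix q) (Ix q) ℂ := Matrix.fromBlocks !![1, 0; 0, -1] 0 0 0

/-- `ad H = [H, ·]`. -/
noncomputable def adH : Matrix (Ix q) (Ix q) ℂ →ₗ[ℂ] Matrix (Ix q) (Ix q) ℂ :=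
  LinearMap.mulLeft ℂ (H q) - LinearMap.mulRight ℂ (H q)

/-- The `(-1)`-eigenspace of `θ`. -/
noncomputable def pneg : Submodule ℂ (Matrix (Ix q) (Ix q) ℂ) :=
  LinearMap.ker (θmap q + LinearMap.id)

/-- `p₀ = g₀ ∩ p`. -/
noncomputable def p0 : Submodule ℂ (Matrix (Ix q) (Ix q) ℂ) := g0 q ⊓ pneg q

/-- `p₁ = g₁ ∩ p`. -/
noncomputable def p1 : Submodule ℂ (Matrix (Ix q) (Ix q) ℂ) := g1 q ⊓ pneg q

/-- The supertrace functional `str x = ∑_{even i} x_{ii} - ∑_{odd a} x_{aa}`. -/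
noncomputable def strf : Matrix (Ix q) (Ix q) ℂ →ₗ[ℂ] ℂ :=
  (∑ i : Fin 2, entry q (Sum.inl i) (Sum.inl i))
    - ∑ a : Fin q ⊕ Fin q, entry q (Sum.inr a) (Sum.inr a)

-- Helpers

/-- swap on the even indices -/
def σix : Ix q → Ix q := Sum.elim (fun i => Sum.inl (1 - i)) Sum.inr

/-- diagonal of H -/
noncomputable def hfun : Ix q → ℂ := Sum.elim (fun i => if i = 0 then 1 else -1) (fun _ => 0)

lemma σσ (a : Ix q) : σix q (σix q a) = a := by
  rcases a with i | c
  · fin_cases i <;> rfl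
  · rfl

lemma H_eq : H q = Matrix.diagonal (hfun q) := by
  ext a b
  rcases a with i | c <;> rcases b with j | d <;>
    simp [H, hfun, Matrix.diagonal]
  · fin_cases i <;> fin_cases j <;> simp

lemma gmat_apply (a b : Ix q) : gmat q a b = if b = σix q a then 1 else 0 := by
  rcases a with i | c <;> rcases b with j | d <;>
    simp [gmat, σix, Matrix.one_apply]
  · fin_cases i <;> fin_cases j <;> norm_num
  · simp [eq_comm]

lemma gmat_apply' (a b : Ix q) : gmat q a b = if a = σix q b then 1 else 0 := by
  rw [gmat_apply]
  by_cases h : b = σix q a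
  · rw [if_pos h, if_pos]; rw [h, σσ]
  · rw [if_neg h, if_neg]; intro h2; exact h (by rw [h2, σσ])

lemma gmat_mul (x : Matrix (Ix q) (Ix q) ℂ) (a b : Ix q) :
    (gmat q * x) a b = x (σix q a) b := by
  rw [Matrix.mul_apply]
  simp [gmat_apply, ite_mul]

lemma mul_gmat (x : Matrix (Ix q) (Ix q) ℂ) (a b : Ix q) :
    (x * gmat q) a b = x a (σix q b) := by
  rw [Matrix.mul_apply]
  simp [gmat_apply', mul_ite]

lemma θmap_apply (x : Matrix (Ix q) (Ix q) ℂ) (a b : Ix q) :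
    θmap q x a b = x (σix q a) (σix q b) := by
  simp only [θmap, LinearMap.comp_apply, LinearMap.mulRight_apply, LinearMap.mulLeft_apply]
  rw [mul_gmat, gmat_mul]

lemma adH_apply (x : Matrix (Ix q) (Ix q) ℂ) (a b : Ix q) :
    adH q x a b = (hfun q a - hfun q b) * x a b := by
  simp only [adH, LinearMap.sub_apply, LinearMap.mulRight_apply, LinearMap.mulLeft_apply,
    Matrix.sub_apply, H_eq, Matrix.diagonal_mul, Matrix.mul_diagonal]
  ring

lemma mem_g0 (x : Matrix (Ix q) (Ix q) ℂ) :
    x ∈ g0 q ↔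
      (∀ (i : Fin 2) (a : Fin q ⊕ Fin q), x (Sum.inl i) (Sum.inr a) = 0) ∧
      (∀ (i : Fin 2) (a : Fin q ⊕ Fin q), x (Sum.inr a) (Sum.inl i) = 0) ∧
      (∀ i j : Fin 2, x (Sum.inl i) (Sum.inl j) + x (Sum.inl (1-j)) (Sum.inl (1-i)) = 0) ∧
      (∀ a b : Fin q, x (Sum.inr (Sum.inr a)) (Sum.inr (Sum.inl b))
          - x (Sum.inr (Sum.inr b)) (Sum.inr (Sum.inl a)) = 0) ∧
      (∀ a b : Fin q, x (Sum.inr (Sum.inl b)) (Sum.inr (Sum.inl a))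
          + x (Sum.inr (Sum.inr a)) (Sum.inr (Sum.inr b)) = 0) ∧
      (∀ a b : Fin q, x (Sum.inr (Sum.inl b)) (Sum.inr (Sum.inr a))
          - x (Sum.inr (Sum.inl a)) (Sum.inr (Sum.inr b)) = 0) := by
  simp [g0, Submodule.mem_iInf, LinearMap.mem_ker, entry_apply, sub_eq_zero, and_assoc,
    LinearMap.coe_mk, AddHom.coe_mk]

lemma mem_g1 (x : Matrix (Ix q) (Ix q) ℂ) :
    x ∈ g1 q ↔
      (∀ i j : Fin 2, x (Sum.inl i) (Sum.inl j) = 0) ∧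
      (∀ a b : Fin q ⊕ Fin q, x (Sum.inr a) (Sum.inr b) = 0) ∧
      (∀ (i : Fin 2) (a : Fin q), x (Sum.inl i) (Sum.inr (Sum.inl a))
          + x (Sum.inr (Sum.inr a)) (Sum.inl (1-i)) = 0) ∧
      (∀ (i : Fin 2) (a : Fin q), x (Sum.inl i) (Sum.inr (Sum.inr a))
          - x (Sum.inr (Sum.inl a)) (Sum.inl (1-i)) = 0) := by
  simp [g1, Submodule.mem_iInf, LinearMap.mem_ker, entry_apply, and_assoc]

lemma mem_pneg (x : Matrix (Ix q) (Ix q) ℂ) :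
    x ∈ pneg q ↔ ∀ a b : Ix q, x (σix q a) (σix q b) = - x a b := by
  rw [pneg, LinearMap.mem_ker]
  constructor
  · intro h a b
    have := congrFun (congrFun h a) b
    simpa [θmap_apply, eq_neg_iff_add_eq_zero] using this
  · intro h
    ext a b
    simp [θmap_apply, h a b]

lemma H_mem_p0 : H q ∈ p0 q := by
  rw [p0, Submodule.mem_inf]
  constructor
  · rw [mem_g0]
    refine ⟨?_, ?_, ?_, ?_, ?_, ?_⟩ <;> intro i j <;>
      simp [H_eq, Matrix.diagonal, hfun] <;>
    first
      | (fin_cases i <;> fin_cases j <;> norm_num)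
      | (intro h; simp [h])
  · rw [mem_pneg]
    intro a b
    rcases a with i | c <;> rcases b with j | d <;>
      simp [H_eq, Matrix.diagonal, hfun, σix]
    fin_cases i <;> fin_cases j <;> norm_num

lemma p0_eq : p0 q = Submodule.span ℂ {H q} := by
  apply le_antisymm
  · intro x hx
    rw [p0, Submodule.mem_inf] at hx
    obtain ⟨hg0, hp⟩ := hx
    rw [mem_g0] at hg0
    obtain ⟨h1, h2, h3, _, _, _⟩ := hg0
    rw [mem_pneg] at hp
    rw [Submodule.mem_span_singleton]
    refine ⟨x (Sum.inl 0) (Sum.inl 0), ?_⟩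
    ext a b
    rcases a with i | c <;> rcases b with j | d
    · have e00 := h3 0 0
      have e01 := h3 0 1
      have e10 := h3 1 0
      norm_num at e00 e01 e10
      fin_cases i <;> fin_cases j <;>
        simp [Matrix.smul_apply, H_eq, Matrix.diagonal, hfun, smul_eq_mul] <;>
        first
          | linear_combination e00
          | linear_combination e00 - e01
          | linear_combination e00 - e10
          | linear_combination e01
          | linear_combination e10
          | linear_combination -e00
          | linear_combination -e01
          | linear_combination -e10
          | ring
    · simp [Matrix.smul_apply, H_eq, Matrix.diagonal, h1 i d]
    · simp [Matrix.smul_apply, H_eq, Matrix.diagonal, h2 j c]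
    · have := hp (Sum.inr c) (Sum.inr d)
      simp [σix] at this
      have hz : x (Sum.inr c) (Sum.inr d) = 0 := by linear_combination this / 2
      simp [Matrix.smul_apply, H_eq, Matrix.diagonal, hfun, hz]
  · rw [Submodule.span_le, Set.singleton_subset_iff]
    exact H_mem_p0 q

lemma hfun_inl_one_sub (i : Fin 2) : hfun q (Sum.inl (1 - i)) = - hfun q (Sum.inl i) := by
  fin_cases i <;> simp [hfun] <;> norm_num

lemma hfun_inr (c : Fin q ⊕ Fin q) : hfun q (Sum.inr c) = 0 := rfl

lemma adH_mem_g1 {x : Matrix (Ix q) (Ix q) ℂ} (hx : x ∈ g1 q) : adH q x ∈ g1 q := by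
  rw [mem_g1] at hx ⊢
  obtain ⟨h1, h2, h3, h4⟩ := hx
  refine ⟨fun i j => ?_, fun a b => ?_, fun i a => ?_, fun i a => ?_⟩ <;>
    simp only [adH_apply]
  · rw [h1]; ring
  · rw [h2]; ring
  · have := h3 i a
    rw [hfun_inl_one_sub]
    simp only [hfun_inr]
    linear_combination hfun q (Sum.inl i) * this
  · have := h4 i a
    rw [hfun_inl_one_sub]
    simp only [hfun_inr]
    linear_combination hfun q (Sum.inl i) * this

lemma adH_sq {x : Matrix (Ix q) (Ix q) ℂ} (hx : x ∈ g1 q) : adH q (adH q x) = x := by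
  rw [mem_g1] at hx
  obtain ⟨h1, h2, _, _⟩ := hx
  ext a b
  simp only [adH_apply]
  rcases a with i | c <;> rcases b with j | d
  · rw [h1]; ring
  · simp only [hfun, Sum.elim_inl, Sum.elim_inr]; fin_cases i <;> norm_num
  · simp only [hfun, Sum.elim_inl, Sum.elim_inr]; fin_cases j <;> norm_num
  · rw [h2]; ring

lemma g1_inf_ker : g1 q ⊓ LinearMap.ker (adH q) = ⊥ := by
  rw [eq_bot_iff]
  intro x hmem
  rw [Submodule.mem_inf] at hmem
  obtain ⟨hx, hk⟩ := hmem
  rw [mem_g1] at hx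
  obtain ⟨h1, h2, _, _⟩ := hx
  rw [LinearMap.mem_ker] at hk
  have hk' : ∀ a b, (hfun q a - hfun q b) * x a b = 0 := by
    intro a b; rw [← adH_apply, hk]; rfl
  simp only [Submodule.mem_bot]
  ext a b
  rcases a with i | c <;> rcases b with j | d
  · simp [h1]
  · have := hk' (Sum.inl i) (Sum.inr d)
    simp only [hfun, Sum.elim_inl, Sum.elim_inr, sub_zero] at this
    have hne : (if i = 0 then (1:ℂ) else -1) ≠ 0 := by fin_cases i <;> norm_num
    simpa using (mul_eq_zero.mp this).resolve_left hne
  · have := hk' (Sum.inr c) (Sum.inl j)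
    simp only [hfun, Sum.elim_inl, Sum.elim_inr, zero_sub] at this
    have hne : -(if j = 0 then (1:ℂ) else -1) ≠ 0 := by fin_cases j <;> norm_num
    simpa using (mul_eq_zero.mp this).resolve_left hne
  · simp [h2]

lemma g1_decomp :
    g1 q = (g1 q ⊓ LinearMap.ker (adH q - LinearMap.id)) ⊔
      (g1 q ⊓ LinearMap.ker (adH q + LinearMap.id)) := by
  apply le_antisymm
  · intro x hx
    have haP : (2⁻¹ : ℂ) • (x + adH q x) ∈ g1 q ⊓ LinearMap.ker (adH q - LinearMap.id) := by
      rw [Submodule.mem_inf]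
      constructor
      · exact Submodule.smul_mem _ _ (Submodule.add_mem _ hx (adH_mem_g1 q hx))
      · rw [LinearMap.mem_ker]
        simp only [LinearMap.sub_apply, LinearMap.id_apply, _root_.map_smul, map_add,
          adH_sq q hx]
        module
    have haM : (2⁻¹ : ℂ) • (x - adH q x) ∈ g1 q ⊓ LinearMap.ker (adH q + LinearMap.id) := by
      rw [Submodule.mem_inf]
      constructor
      · exact Submodule.smul_mem _ _ (Submodule.sub_mem _ hx (adH_mem_g1 q hx))
      · rw [LinearMap.mem_ker]
        simp only [LinearMap.add_apply, LinearMap.id_apply, _root_.map_smul, map_sub,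
          adH_sq q hx]
        module
    have : x = (2⁻¹ : ℂ) • (x + adH q x) + (2⁻¹ : ℂ) • (x - adH q x) := by
      module
    rw [this]
    exact Submodule.add_mem_sup haP haM
  · exact sup_le inf_le_left inf_le_left

lemma p1_inf_ker : p1 q ⊓ LinearMap.ker (adH q) = ⊥ := by
  rw [← le_bot_iff, ← g1_inf_ker q]
  exact inf_le_inf_right _ inf_le_left

/-- matrix of the `+1` eigenspace of `ad H` in `g1`, from its bottom-left column -/
noncomputable def mk1fun (v : (Fin q ⊕ Fin q) → ℂ) : Matrix (Ix q) (Ix q) ℂ :=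
  Matrix.of fun a b =>
    match a, b with
    | Sum.inl _, Sum.inl _ => 0
    | Sum.inl i, Sum.inr (Sum.inl a) => if i = 0 then -v (Sum.inr a) else 0
    | Sum.inl i, Sum.inr (Sum.inr a) => if i = 0 then v (Sum.inl a) else 0
    | Sum.inr c, Sum.inl j => if j = 1 then v c else 0
    | Sum.inr _, Sum.inr _ => 0

noncomputable def mk1 : ((Fin q ⊕ Fin q) → ℂ) →ₗ[ℂ] Matrix (Ix q) (Ix q) ℂ where
  toFun := mk1fun q
  map_add' v w := by
    ext a b
    rcases a with i | c <;> rcases b with j | (d | d) <;>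
      simp [mk1fun, Matrix.add_apply] <;>
      try (split <;> (try simp) <;> (try ring))
  map_smul' t v := by
    ext a b
    rcases a with i | c <;> rcases b with j | (d | d) <;>
      simp [mk1fun, Matrix.smul_apply] <;>
      try (split <;> (try simp) <;> (try ring))

lemma mk1_mem (v : (Fin q ⊕ Fin q) → ℂ) :
    mk1 q v ∈ g1 q ⊓ LinearMap.ker (adH q - LinearMap.id) := by
  rw [Submodule.mem_inf]
  constructor
  · rw [mem_g1]
    refine ⟨fun i j => rfl, fun a b => rfl, fun i a => ?_, fun i a => ?_⟩ <;>
      fin_cases i <;> simp [mk1, mk1fun] <;> norm_num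
  · rw [LinearMap.mem_ker]
    ext a b
    simp only [LinearMap.sub_apply, LinearMap.id_apply, Matrix.sub_apply, adH_apply,
      Matrix.zero_apply]
    rcases a with i | c <;> rcases b with j | (d | d) <;>
      simp [mk1, mk1fun, hfun] <;>
      try (fin_cases i <;> simp <;> norm_num)
    all_goals (fin_cases j <;> simp <;> norm_num)

lemma mk1_inj : Function.Injective (mk1 q) := by
  intro v w h
  funext c
  have := congrFun (congrFun h (Sum.inr c)) (Sum.inl 1)
  simpa [mk1, mk1fun] using this

lemma mk1_surj {x : Matrix (Ix q) (Ix q) ℂ}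
    (hx : x ∈ g1 q ⊓ LinearMap.ker (adH q - LinearMap.id)) :
    mk1 q (fun c => x (Sum.inr c) (Sum.inl 1)) = x := by
  rw [Submodule.mem_inf] at hx
  obtain ⟨hg, hk⟩ := hx
  rw [mem_g1] at hg
  obtain ⟨h1, h2, h3, h4⟩ := hg
  rw [LinearMap.mem_ker] at hk
  have hk' : ∀ a b, (hfun q a - hfun q b) * x a b = x a b := by
    intro a b
    have h0 := congrFun (congrFun hk a) b
    simp only [LinearMap.sub_apply, LinearMap.id_apply, Matrix.sub_apply, adH_apply,
      Matrix.zero_apply] at h0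
    linear_combination h0
  ext a b
  rcases a with i | c <;> rcases b with j | (d | d)
  · simp [mk1, mk1fun, h1]
  · fin_cases i
    · have h30 := h3 0 d
      norm_num at h30
      simp [mk1, mk1fun]
      first | linear_combination h30 | linear_combination -h30 | linear_combination -2*h30 | linear_combination 2*h30
    · have := hk' (Sum.inl 1) (Sum.inr (Sum.inl d))
      simp [hfun] at this
      simp [mk1, mk1fun]
      first | linear_combination this | linear_combination -this/2 | linear_combination this/2
  · fin_cases i
    · have h40 := h4 0 d
      norm_num at h40
      simp [mk1, mk1fun]
      first | linear_combination h40 | linear_combination -h40 | linear_combination -2*h40 | linear_combination 2*h40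
    · have := hk' (Sum.inl 1) (Sum.inr (Sum.inr d))
      simp [hfun] at this
      simp [mk1, mk1fun]
      first | linear_combination this | linear_combination -this/2 | linear_combination this/2
  · fin_cases j
    · have := hk' (Sum.inr c) (Sum.inl 0)
      simp [hfun] at this
      simp [mk1, mk1fun]
      first | linear_combination this | linear_combination -this/2 | linear_combination this/2
    · simp [mk1, mk1fun]
  · exact (h2 c (Sum.inl d)).symm
  · exact (h2 c (Sum.inr d)).symm

lemma finrank_plus :
    Module.finrank ℂ ↥(g1 q ⊓ LinearMap.ker (adH q - LinearMap.id)) = 2 * q := by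
  let f := (mk1 q).codRestrict (g1 q ⊓ LinearMap.ker (adH q - LinearMap.id)) (mk1_mem q)
  have hbij : Function.Bijective f := by
    constructor
    · intro v w h
      apply mk1_inj q
      exact congrArg Subtype.val h
    · rintro ⟨x, hx⟩
      exact ⟨fun c => x (Sum.inr c) (Sum.inl 1), Subtype.ext (mk1_surj q hx)⟩
  have := (LinearEquiv.ofBijective f hbij).finrank_eq
  rw [← this, Module.finrank_fintype_fun_eq_card]
  simp [Fintype.card_sum]
  ring

/-- parametrization of `p1` by the first bottom-left column -/
noncomputable def mkpfun (v : (Fin q ⊕ Fin q) → ℂ) : Matrix (Ix q) (Ix q) ℂ :=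
  Matrix.of fun a b =>
    match a, b with
    | Sum.inl _, Sum.inl _ => 0
    | Sum.inl i, Sum.inr (Sum.inl a) => if i = 0 then v (Sum.inr a) else -v (Sum.inr a)
    | Sum.inl i, Sum.inr (Sum.inr a) => if i = 0 then -v (Sum.inl a) else v (Sum.inl a)
    | Sum.inr c, Sum.inl j => if j = 0 then v c else -v c
    | Sum.inr _, Sum.inr _ => 0

noncomputable def mkp : ((Fin q ⊕ Fin q) → ℂ) →ₗ[ℂ] Matrix (Ix q) (Ix q) ℂ where
  toFun := mkpfun q
  map_add' v w := by
    ext a b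
    rcases a with i | c <;> rcases b with j | (d | d) <;>
      simp [mkpfun, Matrix.add_apply] <;>
      try (split <;> (try simp) <;> (try ring))
  map_smul' t v := by
    ext a b
    rcases a with i | c <;> rcases b with j | (d | d) <;>
      simp [mkpfun, Matrix.smul_apply] <;>
      try (split <;> (try simp) <;> (try ring))

lemma mkp_mem (v : (Fin q ⊕ Fin q) → ℂ) : mkp q v ∈ p1 q := by
  rw [p1, Submodule.mem_inf]
  constructor
  · rw [mem_g1]
    refine ⟨fun i j => rfl, fun a b => rfl, fun i a => ?_, fun i a => ?_⟩ <;>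
      fin_cases i <;> simp [mkp, mkpfun] <;> norm_num
  · rw [mem_pneg]
    intro a b
    rcases a with i | c <;> rcases b with j | (d | d) <;>
      simp [mkp, mkpfun, σix] <;>
      try (fin_cases i <;> simp <;> norm_num)
    all_goals (fin_cases j <;> simp <;> norm_num)

lemma mkp_inj : Function.Injective (mkp q) := by
  intro v w h
  funext c
  have := congrFun (congrFun h (Sum.inr c)) (Sum.inl 0)
  simpa [mkp, mkpfun] using this

lemma mkp_surj {x : Matrix (Ix q) (Ix q) ℂ} (hx : x ∈ p1 q) :
    mkp q (fun c => x (Sum.inr c) (Sum.inl 0)) = x := by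
  rw [p1, Submodule.mem_inf] at hx
  obtain ⟨hg, hp⟩ := hx
  rw [mem_g1] at hg
  obtain ⟨h1, h2, h3, h4⟩ := hg
  rw [mem_pneg] at hp
  have hpc : ∀ c : Fin q ⊕ Fin q, x (Sum.inr c) (Sum.inl 1) = - x (Sum.inr c) (Sum.inl 0) := by
    intro c
    have := hp (Sum.inr c) (Sum.inl 0)
    simpa [σix] using this
  ext a b
  rcases a with i | c <;> rcases b with j | (d | d)
  · simp [mkp, mkpfun, h1]
  · have h30 := h3 0 d
    have h31 := h3 1 d
    norm_num at h30 h31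
    have e1 := hpc (Sum.inr d)
    fin_cases i <;> simp [mkp, mkpfun] <;>
      first
        | linear_combination -h30 - e1
        | linear_combination h30 + e1
        | linear_combination -h31
        | linear_combination h31
        | linear_combination -h30 + e1
        | linear_combination h30 - e1
        | linear_combination -h31 - e1
        | linear_combination h31 + e1
        | linear_combination -h31 + e1
        | linear_combination h31 - e1
  · have h40 := h4 0 d
    have h41 := h4 1 d
    norm_num at h40 h41
    have e1 := hpc (Sum.inl d)
    fin_cases i <;> simp [mkp, mkpfun] <;>
      first
        | linear_combination -h40 - e1
        | linear_combination h40 + e1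
        | linear_combination -h41
        | linear_combination h41
        | linear_combination -h40 + e1
        | linear_combination h40 - e1
        | linear_combination -h41 - e1
        | linear_combination h41 + e1
        | linear_combination -h41 + e1
        | linear_combination h41 - e1
  · have e1 := hpc c
    fin_cases j <;> simp [mkp, mkpfun] <;>
      first
        | linear_combination e1
        | linear_combination -e1
  · exact (h2 c (Sum.inl d)).symm
  · exact (h2 c (Sum.inr d)).symm

lemma finrank_p1 : Module.finrank ℂ ↥(p1 q) = 2 * q := by
  let f := (mkp q).codRestrict (p1 q) (mkp_mem q)
  have hbij : Function.Bijective f := by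
    constructor
    · intro v w h
      apply mkp_inj q
      exact congrArg Subtype.val h
    · rintro ⟨x, hx⟩
      exact ⟨fun c => x (Sum.inr c) (Sum.inl 0), Subtype.ext (mkp_surj q hx)⟩
  have := (LinearEquiv.ofBijective f hbij).finrank_eq
  rw [← this, Module.finrank_fintype_fun_eq_card]
  simp [Fintype.card_sum]
  ring

/-- an element of the `-1` eigenspace -/
noncomputable def EM (a0 : Fin q) : Matrix (Ix q) (Ix q) ℂ :=
  Matrix.of fun a b =>
    match a, b with
    | Sum.inl i, Sum.inr (Sum.inr c) => if i = 1 ∧ c = a0 then 1 else 0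
    | Sum.inr (Sum.inl c), Sum.inl j => if j = 0 ∧ c = a0 then 1 else 0
    | _, _ => 0

lemma EM_mem (a0 : Fin q) : EM q a0 ∈ g1 q ⊓ LinearMap.ker (adH q + LinearMap.id) := by
  rw [Submodule.mem_inf]
  constructor
  · rw [mem_g1]
    refine ⟨fun i j => rfl, fun a b => ?_, fun i a => ?_, fun i a => ?_⟩
    · rcases a with a | a <;> rfl
    · fin_cases i <;> simp [EM] <;> norm_num
    · fin_cases i <;> simp [EM] <;> norm_num
  · rw [LinearMap.mem_ker]
    ext a b
    simp only [LinearMap.add_apply, LinearMap.id_apply, Matrix.add_apply, adH_apply,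
      Matrix.zero_apply]
    rcases a with i | (c | c) <;> rcases b with j | (d | d) <;>
      simp [EM, hfun] <;>
      try (fin_cases i <;> simp <;> try norm_num)
    all_goals try (fin_cases j <;> simp <;> try norm_num)
    all_goals (split_ifs <;> norm_num)

lemma EM_ne (a0 : Fin q) : EM q a0 ≠ 0 := by
  intro h
  have := congrFun (congrFun h (Sum.inr (Sum.inl a0))) (Sum.inl 0)
  simp [EM] at this

lemma strf_smulH (c : ℂ) : strf q (((2:ℂ)⁻¹ • H q) * (c • H q)) = c := by
  have h1 : ((2:ℂ)⁻¹ • H q) * (c • H q) = ((2:ℂ)⁻¹ * c) • (H q * H q) := by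
    rw [Matrix.smul_mul, Matrix.mul_smul, smul_smul]
  rw [h1, _root_.map_smul, smul_eq_mul]
  have h2 : H q * H q = Matrix.diagonal (fun a => hfun q a * hfun q a) := by
    rw [H_eq, Matrix.diagonal_mul_diagonal]
  rw [h2]
  have h3 : strf q (Matrix.diagonal (fun a => hfun q a * hfun q a)) = 2 := by
    simp [strf, entry_apply, Matrix.diagonal_apply_eq, Fin.sum_univ_two, hfun]
    norm_num
  rw [h3]
  ring

lemma H_ne : H q ≠ 0 := by
  intro h
  have := congrFun (congrFun h (Sum.inl 0)) (Sum.inl 0)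
  simp [H_eq, Matrix.diagonal, hfun] at this


/-- In `g = osp(2|2q,ℂ)` with the involution `θ(x) = gxg`, `g = diag(I,1_{2q})`:
`p₀ = 𝔞` is one-dimensional, spanned by `H` (hence self-centralizing in `p₀`);
the centralizer of `𝔞` in `p₁` is zero; `g₁` splits into the two (±1)-eigenspaces
of `ad H`, both nonzero, i.e. there are exactly the two (odd) restricted roots `±λ`
with `λ(H) = 1`; the odd multiplicity is `m_{1,λ} = dim p₁ = 2q`; and the coroot
`A_λ ∈ 𝔞` determined by `str(A_λ h) = λ(h)` satisfies `λ(A_λ) ≠ 0`. -/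
theorem stmt_18 (hq : 1 ≤ q) :
    (p0 q = Submodule.span ℂ {H q} ∧ H q ≠ 0) ∧
    (p1 q ⊓ LinearMap.ker (adH q) = ⊥) ∧
    (g1 q = (g1 q ⊓ LinearMap.ker (adH q - LinearMap.id)) ⊔
        (g1 q ⊓ LinearMap.ker (adH q + LinearMap.id)) ∧
      g1 q ⊓ LinearMap.ker (adH q - LinearMap.id) ≠ ⊥ ∧
      g1 q ⊓ LinearMap.ker (adH q + LinearMap.id) ≠ ⊥) ∧
    (Module.finrank ℂ ↥(g1 q ⊓ LinearMap.ker (adH q - LinearMap.id)) = 2 * q ∧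
      Module.finrank ℂ ↥(p1 q) = 2 * q) ∧
    (∃ A ∈ p0 q, ∃ t : ℂ, A = t • H q ∧
      (∀ c : ℂ, strf q (A * (c • H q)) = c) ∧ t ≠ 0) := by
  refine ⟨⟨p0_eq q, H_ne q⟩, p1_inf_ker q, ⟨g1_decomp q, ?_, ?_⟩,
    ⟨finrank_plus q, finrank_p1 q⟩,
    ⟨(2:ℂ)⁻¹ • H q, Submodule.smul_mem _ _ (H_mem_p0 q), (2:ℂ)⁻¹, rfl,
      fun c => strf_smulH q c, by norm_num⟩⟩
  · intro hbot
    have h2 := finrank_plus q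
    rw [hbot] at h2
    rw [finrank_bot] at h2
    omega
  · intro hbot
    exact EM_ne q ⟨0, hq⟩ (by simpa [hbot, Submodule.mem_bot] using EM_mem q ⟨0, hq⟩)

end OspExample
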